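/- Let f, g : (0,∞) → (0,∞) be functions satisfying f(x)·g(1/x) = x for every x > 0. Then for every t > 0, sup_{r > 0} (1/r)·(1 − t/g(r)) = t · sup_{x > 0} ( x/t − f(x) ); that is, U_g(t) = t·L_f(1/t), where L_f is the Legendre transform of f. -/

import Mathlib

theorem stmt19 (f g : ℝ → ℝ) (hf : ∀ x : ℝ, 0 < x → 0 < f x)
    (hg : ∀ x : ℝ, 0 < x → 0 < g x)
    (hrel : ∀ x : ℝ, 0 < x → f x * g (1 / x) = x)
    (t : ℝ) (ht : 0 < t) :
    (⨆ r : Set.Ioi (0 : ℝ), (1 / (r : ℝ)) * (1 - t / g r)) =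
      t * ⨆ x : Set.Ioi (0 : ℝ), ((x : ℝ) / t - f x) := by
  rw [Real.mul_iSup_of_nonneg ht.le]
  -- reindex the left sup via r ↦ 1/r
  let e : Set.Ioi (0 : ℝ) ≃ Set.Ioi (0 : ℝ) :=
    { toFun := fun x => ⟨1 / x, by simpa using one_div_pos.mpr (Set.mem_Ioi.mp x.2)⟩
      invFun := fun x => ⟨1 / x, by simpa using one_div_pos.mpr (Set.mem_Ioi.mp x.2)⟩
      left_inv := fun x => by
        ext; simp [one_div_one_div]
      right_inv := fun x => by
        ext; simp [one_div_one_div] }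
  rw [← e.iSup_comp (g := fun r : Set.Ioi (0:ℝ) => (1 / (r : ℝ)) * (1 - t / g r))]
  refine iSup_congr fun x => ?_
  have hx : (0:ℝ) < x := x.2
  have hfx := hf x hx
  have hgx : g (1 / x) = x / f x := by
    field_simp [hfx.ne'] at hrel ⊢
    linarith [hrel x hx]
  show (1 / ((1:ℝ) / x)) * (1 - t / g (1 / x)) = t * ((x : ℝ) / t - f x)
  rw [hgx, one_div_one_div]
  field_simp
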